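/- Every factor of w of length 3 is a factor of the word u₁ = 11421231211231411; moreover w has exactly 13 distinct factors of length 3. -/

import Mathlib

/-- The four-letter alphabet `A₄ = {1,2,3,4}`; the value `k : Fin 4` represents letter `k+1`. -/
abbrev A4 := Fin 4

/-- The morphism `f` on letters: `f(1)=121, f(2)=123, f(3)=141, f(4)=142`
(letters `1,2,3,4` encoded as `0,1,2,3`). -/
def fm : A4 → List A4
  | 0 => [0, 1, 0]
  | 1 => [0, 1, 2]
  | 2 => [0, 3, 0]
  | 3 => [0, 3, 1]

/-- The morphism `f` extended to words by concatenation. -/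
def fw (u : List A4) : List A4 := u.flatMap fm

/-- The fixed point `w` of `f` starting with the letter `1`: since `|f^k(1)| = 3^k` and each
`f^k(1)` is a prefix of `f^(k+1)(1)`, the `n`-th letter of `w` is the `n`-th letter of
`f^(n+1)(1)`. -/
def w (n : ℕ) : A4 := ((fw^[n + 1]) [0]).getD n 0

/-- The finite word `t` occurs at position `i` in the infinite word `x`. -/
def OccursAt {α : Type*} (t : List α) (x : ℕ → α) (i : ℕ) : Prop :=
  t = (List.range t.length).map fun k => x (i + k)

/-- The finite word `v` is a factor of the infinite word `x`. -/
def FactorOf {α : Type*} (v : List α) (x : ℕ → α) : Prop :=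
  ∃ i, OccursAt v x i

/-- The finite word `v` has period `q ≥ 1`: `v(j) = v(j+q)` whenever `0 ≤ j < |v| - q`. -/
def HasPeriod {α : Type*} (v : List α) (q : ℕ) : Prop :=
  1 ≤ q ∧ ∀ j, j + q < v.length → v[j]? = v[j + q]?

/-- A word lies in `ker ψ` if each letter of `A₄` occurs in it a number of times
divisible by `4`. -/
def InKerPsi (u : List A4) : Prop := ∀ a : A4, 4 ∣ u.count a

/-- `q` is a kernel period of `v`: `1 ≤ q ≤ |v|`, `v` has period `q`, and the prefix of `v`
of length `q` lies in `ker ψ`. -/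
def KernelPeriod (v : List A4) (q : ℕ) : Prop :=
  q ≤ v.length ∧ HasPeriod v q ∧ InKerPsi (v.take q)

lemma fm_len (a : A4) : (fm a).length = 3 := by fin_cases a <;> rfl

lemma fw_len (u : List A4) : (fw u).length = 3 * u.length := by
  induction u with
  | nil => rfl
  | cons a u ih =>
      simp [fw, List.flatMap_cons, fm_len] at *
      omega

lemma fw_getD (u : List A4) (n k : ℕ) (h : n < u.length) (hk : k < 3) :
    (fw u).getD (3 * n + k) 0 = (fm (u.getD n 0)).getD k 0 := by
  induction u generalizing n with
  | nil => simp at h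
  | cons a u ih =>
      cases n with
      | zero =>
          simp only [fw, List.flatMap_cons, mul_zero, zero_add]
          rw [List.getD_append]
          · rfl
          · rw [fm_len]; exact hk
      | succ m =>
          simp only [fw, List.flatMap_cons] at *
          have h3 : 3 * (m + 1) + k = (fm a).length + (3 * m + k) := by
            rw [fm_len]; ring
          rw [h3, List.getD_append_right _ _ _ _ (Nat.le_add_right _ _), Nat.add_sub_cancel_left]
          simp only [List.length_cons] at h
          exact ih m (by omega)

lemma iter_len (m : ℕ) : ((fw^[m]) [0] : List A4).length = 3 ^ m := by
  induction m with
  | zero => rfl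
  | succ m ih => rw [Function.iterate_succ_apply', fw_len, ih, pow_succ, mul_comm]

lemma fw_prefix {u v : List A4} (h : u <+: v) : fw u <+: fw v := by
  obtain ⟨t, rfl⟩ := h
  exact ⟨fw t, by simp [fw]⟩

lemma fw_iter_prefix (m : ℕ) {u v : List A4} (h : u <+: v) : (fw^[m]) u <+: (fw^[m]) v := by
  induction m generalizing u v with
  | zero => exact h
  | succ m ih => rw [Function.iterate_succ_apply, Function.iterate_succ_apply]
                 exact ih (fw_prefix h)

lemma p0 (j : ℕ) : ([0] : List A4) <+: (fw^[j]) [0] := by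
  induction j with
  | zero => exact List.prefix_refl _
  | succ j ih =>
      rw [Function.iterate_succ_apply']
      exact List.IsPrefix.trans ⟨[1, 0], rfl⟩ (fw_prefix ih)

lemma iter_prefix {m m' : ℕ} (h : m ≤ m') : ((fw^[m]) [0] : List A4) <+: (fw^[m']) [0] := by
  have : m' = m + (m' - m) := by omega
  rw [this, Function.iterate_add_apply]
  exact fw_iter_prefix m (p0 _)

lemma prefix_getD {u v : List A4} (h : u <+: v) (n : ℕ) (hn : n < u.length) :
    u.getD n 0 = v.getD n 0 := by
  obtain ⟨t, rfl⟩ := h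
  rw [List.getD_append _ _ _ _ hn]

lemma n_lt_pow {n m : ℕ} (h : n ≤ m) : n < 3 ^ m :=
  Nat.lt_of_lt_of_le (Nat.lt_pow_self (by norm_num : (1:ℕ) < 3))
    (Nat.pow_le_pow_right (by norm_num) h)

lemma w_eq (m n : ℕ) (h : n < 3 ^ m) : w n = ((fw^[m]) [0]).getD n 0 := by
  unfold w
  rcases Nat.le_total (n + 1) m with hm | hm
  · exact prefix_getD (iter_prefix hm) n (by rw [iter_len]; exact n_lt_pow (by omega))
  · exact (prefix_getD (iter_prefix hm) n (by rwa [iter_len])).symm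

lemma w_rec (n k : ℕ) (hk : k < 3) : w (3 * n + k) = (fm (w n)).getD k 0 := by
  have h1 : 3 * n + k < 3 ^ (3 * n + 3) := by
    have := n_lt_pow (le_refl (3 * n + 3))
    omega
  rw [w_eq (3 * n + 3) _ h1, Function.iterate_succ_apply', fw_getD _ n k
      (by rw [iter_len]; exact n_lt_pow (by omega)) hk,
    ← w_eq (3 * n + 2) n (n_lt_pow (by omega))]

def L13 : List (List A4) :=
  [[0,0,1],[0,0,3],[0,1,0],[0,1,2],[0,3,0],[0,3,1],[1,0,0],[1,0,1],[1,2,0],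
   [2,0,1],[2,0,3],[3,0,0],[3,1,0]]

lemma pairMem (n : ℕ) :
    (w n, w (n + 1)) ∈ [((0:A4),(0:A4)),(0,1),(0,3),(1,0),(1,2),(2,0),(3,0),(3,1)] := by
  have h3 : n % 3 = 0 ∨ n % 3 = 1 ∨ n % 3 = 2 := by omega
  rcases h3 with h | h | h
  · obtain ⟨m, rfl⟩ : ∃ m, n = 3 * m := ⟨n / 3, by omega⟩
    have e0 : w (3 * m) = (fm (w m)).getD 0 0 := by
      have := w_rec m 0 (by norm_num); simpa using this
    have e1 : w (3 * m + 1) = (fm (w m)).getD 1 0 := w_rec m 1 (by norm_num)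
    rw [e0, e1]
    generalize w m = a
    fin_cases a <;> decide
  · obtain ⟨m, rfl⟩ : ∃ m, n = 3 * m + 1 := ⟨n / 3, by omega⟩
    have e1 : w (3 * m + 1) = (fm (w m)).getD 1 0 := w_rec m 1 (by norm_num)
    have e2 : w (3 * m + 1 + 1) = (fm (w m)).getD 2 0 := by
      rw [show 3 * m + 1 + 1 = 3 * m + 2 by ring]; exact w_rec m 2 (by norm_num)
    rw [e1, e2]
    generalize w m = a
    fin_cases a <;> decide
  · obtain ⟨m, rfl⟩ : ∃ m, n = 3 * m + 2 := ⟨n / 3, by omega⟩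
    have e2 : w (3 * m + 2) = (fm (w m)).getD 2 0 := w_rec m 2 (by norm_num)
    have e3 : w (3 * m + 2 + 1) = (fm (w (m + 1))).getD 0 0 := by
      rw [show 3 * m + 2 + 1 = 3 * (m + 1) + 0 by ring]; exact w_rec (m + 1) 0 (by norm_num)
    rw [e2, e3]
    generalize w m = a
    generalize w (m + 1) = b
    fin_cases a <;> fin_cases b <;> decide

lemma tripleMem (i : ℕ) : [w i, w (i + 1), w (i + 2)] ∈ L13 := by
  have h3 : i % 3 = 0 ∨ i % 3 = 1 ∨ i % 3 = 2 := by omega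
  rcases h3 with h | h | h
  · obtain ⟨m, rfl⟩ : ∃ m, i = 3 * m := ⟨i / 3, by omega⟩
    have e0 : w (3 * m) = (fm (w m)).getD 0 0 := by
      have := w_rec m 0 (by norm_num); simpa using this
    have e1 : w (3 * m + 1) = (fm (w m)).getD 1 0 := w_rec m 1 (by norm_num)
    have e2 : w (3 * m + 2) = (fm (w m)).getD 2 0 := w_rec m 2 (by norm_num)
    rw [e0, e1, e2]
    generalize w m = a
    fin_cases a <;> decide
  · obtain ⟨m, rfl⟩ : ∃ m, i = 3 * m + 1 := ⟨i / 3, by omega⟩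
    have e1 : w (3 * m + 1) = (fm (w m)).getD 1 0 := w_rec m 1 (by norm_num)
    have e2 : w (3 * m + 1 + 1) = (fm (w m)).getD 2 0 := by
      rw [show 3 * m + 1 + 1 = 3 * m + 2 by ring]; exact w_rec m 2 (by norm_num)
    have e3 : w (3 * m + 1 + 2) = (fm (w (m + 1))).getD 0 0 := by
      rw [show 3 * m + 1 + 2 = 3 * (m + 1) + 0 by ring]; exact w_rec (m + 1) 0 (by norm_num)
    rw [e1, e2, e3]
    generalize w m = a
    generalize w (m + 1) = b
    fin_cases a <;> fin_cases b <;> decide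
  · obtain ⟨m, rfl⟩ : ∃ m, i = 3 * m + 2 := ⟨i / 3, by omega⟩
    have hp := pairMem m
    have e2 : w (3 * m + 2) = (fm (w m)).getD 2 0 := w_rec m 2 (by norm_num)
    have e3 : w (3 * m + 2 + 1) = (fm (w (m + 1))).getD 0 0 := by
      rw [show 3 * m + 2 + 1 = 3 * (m + 1) + 0 by ring]; exact w_rec (m + 1) 0 (by norm_num)
    have e4 : w (3 * m + 2 + 2) = (fm (w (m + 1))).getD 1 0 := by
      rw [show 3 * m + 2 + 2 = 3 * (m + 1) + 1 by ring]; exact w_rec (m + 1) 1 (by norm_num)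
    rw [e2, e3, e4]
    generalize w m = a at hp ⊢
    generalize w (m + 1) = b at hp ⊢
    fin_cases a <;> fin_cases b <;> first
      | exact absurd hp (by decide)
      | decide

lemma triple_factor (p : ℕ) (v : List A4) (hv : v = [w p, w (p + 1), w (p + 2)]) :
    FactorOf v w := by
  refine ⟨p, ?_⟩
  rw [OccursAt, hv]
  rw [show List.range ([w p, w (p + 1), w (p + 2)] : List A4).length = [0, 1, 2] from rfl]
  simp

lemma w_small (p : ℕ) (h : p < 81) : w p = ((fw^[4]) [0]).getD p 0 := w_eq 4 p (by norm_num; omega)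

lemma all_factors (v : List A4) (hv : v ∈ L13) : FactorOf v w := by
  have key : ∀ p : ℕ, p < 79 →
      v = [((fw^[4]) [0]).getD p 0, ((fw^[4]) [0]).getD (p+1) 0, ((fw^[4]) [0]).getD (p+2) 0] →
      FactorOf v w := by
    intro p hp he
    exact triple_factor p v (by rw [w_small p (by omega), w_small (p+1) (by omega),
      w_small (p+2) (by omega)]; exact he)
  fin_cases hv
  · exact key 2 (by norm_num) (by decide)
  · exact key 47 (by norm_num) (by decide)
  · exact key 0 (by norm_num) (by decide)
  · exact key 3 (by norm_num) (by decide)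
  · exact key 15 (by norm_num) (by decide)
  · exact key 48 (by norm_num) (by decide)
  · exact key 1 (by norm_num) (by decide)
  · exact key 50 (by norm_num) (by decide)
  · exact key 4 (by norm_num) (by decide)
  · exact key 5 (by norm_num) (by decide)
  · exact key 14 (by norm_num) (by decide)
  · exact key 16 (by norm_num) (by decide)
  · exact key 49 (by norm_num) (by decide)

lemma set_eq : {v : List A4 | FactorOf v w ∧ v.length = 3} = {v | v ∈ L13} := by
  ext v
  constructor
  · rintro ⟨⟨i, hocc⟩, hlen⟩
    rw [OccursAt, hlen] at hocc
    rw [show List.range 3 = [0, 1, 2] from rfl] at hocc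
    simp only [List.map_cons, List.map_nil, Nat.add_zero] at hocc
    rw [Set.mem_setOf_eq, hocc]
    exact tripleMem i
  · intro hv
    simp only [Set.mem_setOf_eq] at hv
    refine ⟨all_factors v hv, ?_⟩
    fin_cases hv <;> rfl

/-- Every factor of `w` of length 3 is a factor of `u₁ = 11421231211231411` (encoded with
letters `1,2,3,4` as `0,1,2,3`), and `w` has exactly 13 distinct factors of length 3. -/
theorem stmt14 :
    (∀ v : List A4, FactorOf v w → v.length = 3 →
      v <:+: ([0, 0, 3, 1, 0, 1, 2, 0, 1, 0, 0, 1, 2, 0, 3, 0, 0] : List A4)) ∧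
    {v : List A4 | FactorOf v w ∧ v.length = 3}.ncard = 13 := by
  constructor
  · intro v hf hlen
    have hv : v ∈ L13 := by
      have hm : v ∈ {v : List A4 | FactorOf v w ∧ v.length = 3} := ⟨hf, hlen⟩
      rw [set_eq] at hm
      exact hm
    fin_cases hv <;> decide
  · rw [set_eq]
    have : {v : List A4 | v ∈ L13} = ↑L13.toFinset := by
      ext v; simp [List.mem_toFinset]
    rw [this, Set.ncard_coe_finset]
    decide
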